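/- arXiv:2601.20635 — 2 statements merged into one kernel-verified Lean document; each statement's English description precedes it below -/
import Mathlib

section
/- Let R be a commutative Noetherian ring, J an ideal of R, and R̂ the J-adic completion of R. For any finitely generated R-module π, Hom as R-modules from R̂ to the R̂-module π ⊗ R̂ coincides with Hom as R̂-modules: restriction of scalars gives a bijection Hom_{R̂}(R̂, M) ≅ Hom_R(R̂, M) for any finitely generated R̂-module M that is J-adically complete. -/
open AdicCompletion

section Aux

variable {R : Type*} [CommRing R]

/-- Key lemma: an element of the adic completion of a Noetherian ring whose `n`-th
component vanishes lies in `J ^ n • ⊤` (as an `R`-submodule). -/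
lemma aux_mem_smul_top_of_val_eq_zero [IsNoetherianRing R] (J : Ideal R) (n : ℕ)
    (x : AdicCompletion J R) (hx : x.val n = 0) :
    x ∈ ((J ^ n : Ideal R) • ⊤ : Submodule R (AdicCompletion J R)) := by
  set N : Submodule R R := (J ^ n • ⊤ : Submodule R R) with hN
  have hexact := AdicCompletion.map_exact (I := J) (Submodule.injective_subtype N)
      (LinearMap.exact_subtype_mkQ N) (Submodule.mkQ_surjective N)
  have hzero : AdicCompletion.map J N.mkQ x = 0 := by
    ext m
    rw [AdicCompletion.map_val_apply, AdicCompletion.val_zero]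
    obtain ⟨r, hr⟩ := Submodule.Quotient.mk_surjective _ (x.val m)
    rw [← hr, LinearMap.reduceModIdeal_apply, Pi.zero_apply, Submodule.Quotient.mk_eq_zero]
    rcases le_total m n with hmn | hnm
    · -- here `x.val m = 0`, so `r ∈ J ^ m • ⊤`
      have h0 := AdicCompletion.transitionMap_comp_eval_apply (I := J) (M := R) hmn x
      rw [hx, _root_.map_zero] at h0
      rw [← h0] at hr
      have hrm : r ∈ (J ^ m • ⊤ : Submodule R R) := by
        rwa [← Submodule.Quotient.mk_eq_zero]
      have : N.mkQ r ∈ Submodule.map N.mkQ (J ^ m • ⊤ : Submodule R R) :=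
        ⟨r, hrm, rfl⟩
      rw [Submodule.map_smul''] at this
      exact Submodule.smul_mono le_rfl le_top this
    · -- here `r ∈ N`, so `N.mkQ r = 0`
      have h0 := AdicCompletion.transitionMap_comp_eval_apply (I := J) (M := R) hnm x
      rw [← hr] at h0
      change (Submodule.Quotient.mk r : R ⧸ N) = _ at h0
      rw [hx] at h0
      have hrN : r ∈ N := (Submodule.Quotient.mk_eq_zero N).mp h0
      have : N.mkQ r = 0 := (Submodule.Quotient.mk_eq_zero N).mpr hrN
      rw [this]
      exact Submodule.zero_mem _
  obtain ⟨y, hy⟩ := (hexact x).mp hzero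
  have hfin : Module.Finite R N := Module.Finite.iff_fg.mpr (IsNoetherian.noetherian N)
  obtain ⟨t, ht⟩ := AdicCompletion.ofTensorProduct_surjective_of_finite J N y
  have hx' : x = AdicCompletion.ofTensorProduct J R
      (LinearMap.baseChange (AdicCompletion J R) N.subtype t) := by
    rw [← hy, ← ht]
    exact congrArg (fun g => g t)
      (AdicCompletion.ofTensorProduct_naturality J N.subtype).symm ▸ rfl
  rw [hx']
  clear hx' ht hy hzero hexact hx
  induction t using TensorProduct.induction_on with
  | zero => simp
  | tmul c a =>
      rw [LinearMap.baseChange_tmul, AdicCompletion.ofTensorProduct_tmul]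
      have ha : (a : R) ∈ (J ^ n : Ideal R) := by
        have h : (J ^ n • ⊤ : Ideal R) = J ^ n := by ext y; simp
        exact h ▸ a.2
      have hc : c • AdicCompletion.of J R (N.subtype a) = (a : R) • c := by
        rw [smul_eq_mul,
          show AdicCompletion.of J R (N.subtype a)
            = algebraMap R (AdicCompletion J R) (a : R) from rfl,
          mul_comm, ← Algebra.smul_def]
      erw [hc]
      exact Submodule.smul_mem_smul ha trivial
  | add u v hu hv =>
      rw [map_add, map_add]
      exact Submodule.add_mem _ hu hv

end Aux

/-- Let `R` be a commutative Noetherian ring, `J` an ideal, `R̂` the `J`-adic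
completion of `R`.  For any finitely generated `R̂`-module `M` which is complete
with respect to the (extension of the) ideal `J`, restriction of scalars gives a
bijection `Hom_{R̂}(R̂, M) ≅ Hom_R(R̂, M)`: every `R`-linear map `R̂ → M` is
automatically `R̂`-linear. -/
theorem restrictScalars_bijective_of_complete
    (R : Type*) [CommRing R] [IsNoetherianRing R] (J : Ideal R)
    (M : Type*) [AddCommGroup M]
    [Module (AdicCompletion J R) M] [Module R M]
    [IsScalarTower R (AdicCompletion J R) M]
    [Module.Finite (AdicCompletion J R) M]
    [IsAdicComplete (J.map (algebraMap R (AdicCompletion J R))) M] :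
    Function.Bijective
      (fun f : (AdicCompletion J R) →ₗ[AdicCompletion J R] M =>
        (f.restrictScalars R : AdicCompletion J R →ₗ[R] M)) := by
  constructor
  · intro f g h
    exact LinearMap.ext fun x => DFunLike.congr_fun h x
  · intro f
    refine ⟨LinearMap.toSpanSingleton (AdicCompletion J R) M (f 1), ?_⟩
    set Jhat := J.map (algebraMap R (AdicCompletion J R)) with hJhat
    -- the difference of `f` and `x ↦ x • f 1` as an `R`-linear map
    set g : AdicCompletion J R →ₗ[R] M :=
      f - (LinearMap.toSpanSingleton (AdicCompletion J R) M (f 1)).restrictScalars R with hg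
    have hg1 : ∀ r : R, g (AdicCompletion.of J R r) = 0 := by
      intro r
      have hof : AdicCompletion.of J R r = algebraMap R (AdicCompletion J R) r := rfl
      simp only [hg, LinearMap.sub_apply, LinearMap.coe_restrictScalars,
        LinearMap.toSpanSingleton_apply, hof, Algebra.algebraMap_eq_smul_one,
        LinearMapClass.map_smul, algebraMap_smul, one_smul, sub_self, smul_zero]
    have hsmul : ∀ n : ℕ, ((J ^ n : Ideal R) • ⊤ : Submodule R M) ≤
        (Submodule.restrictScalars R ((Jhat ^ n : Ideal (AdicCompletion J R)) • ⊤ :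
          Submodule (AdicCompletion J R) M)) := by
      intro n
      rw [Submodule.smul_le]
      intro a ha m _
      have h1 : (a : R) • m = (algebraMap R (AdicCompletion J R) a) • m :=
        (algebraMap_smul (AdicCompletion J R) a m).symm
      have h2 : algebraMap R (AdicCompletion J R) a ∈ (Jhat ^ n : Ideal (AdicCompletion J R)) := by
        rw [hJhat, ← Ideal.map_pow]
        exact Ideal.mem_map_of_mem _ ha
      rw [Submodule.restrictScalars_mem, h1]
      exact Submodule.smul_mem_smul h2 trivial
    have key : ∀ x : AdicCompletion J R, g x = 0 := by
      intro x
      have hmem : ∀ n : ℕ, g x ∈ ((Jhat ^ n : Ideal (AdicCompletion J R)) • ⊤ :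
          Submodule (AdicCompletion J R) M) := by
        intro n
        obtain ⟨r, hr⟩ := Submodule.Quotient.mk_surjective _ (x.val n)
        have hvn : (x - AdicCompletion.of J R r).val n = 0 := by
          rw [AdicCompletion.val_sub_apply, AdicCompletion.of_apply, Submodule.mkQ_apply, hr, sub_self]
        have hy := aux_mem_smul_top_of_val_eq_zero J n _ hvn
        have hgx : g x = g (x - AdicCompletion.of J R r) := by
          rw [map_sub, hg1 r, sub_zero]
        have : g (x - AdicCompletion.of J R r) ∈
            Submodule.map g ((J ^ n : Ideal R) • ⊤ : Submodule R (AdicCompletion J R)) :=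
          ⟨_, hy, rfl⟩
        rw [Submodule.map_smul''] at this
        have := Submodule.smul_mono le_rfl le_top this
        rw [hgx]
        exact hsmul n this
      have haus : IsHausdorff Jhat M := inferInstance
      refine haus.haus (g x) (fun n => ?_)
      rw [SModEq.zero]
      exact hmem n
    refine LinearMap.ext fun x => ?_
    have := key x
    rw [hg, LinearMap.sub_apply, sub_eq_zero] at this
    exact this.symm
end

section
/- The center of the affine Hecke algebra H(n, q), for q not a root of unity, contains the ring C[y₁^{±1},…,y_n^{±1}]^{S_n} of symmetric Laurent polynomials; in particular, every symmetric Laurent polynomial in y₁,…,y_n commutes with each generator T_i. -/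
theorem list_pairwise_total {α : Type*} {R : α → α → Prop} (h : ∀ a b, R a b) :
    ∀ l : List α, l.Pairwise R := by
  intro l
  induction l with
  | nil => exact List.Pairwise.nil
  | cons a t ih => exact List.Pairwise.cons (fun b _ => h a b) ih

theorem quad_id {A : Type*} [Ring A] (U V W X : A)
    (hUV : U*V = V*U) (hUW : U*W = W*U) (hUX : U*X = X*U)
    (hVW : V*W = W*V) (hVX : V*X = X*V) :
    W*U*U + X*V*V = (U+V)*(W*U + X*V) - U*V*(W+X) := by
  have e1 : U*(V*W) = V*(W*U) := by
    rw [← mul_assoc, hUV, mul_assoc, hUW]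
  have e2 : U*(V*X) = U*(X*V) := by rw [hVX]
  have e3 : U*(W*U) = W*U*U := by rw [← mul_assoc, hUW]
  have e4 : V*(X*V) = X*V*V := by rw [← mul_assoc, hVX]
  refine Eq.symm ?_
  calc (U+V)*(W*U + X*V) - U*V*(W+X)
      = U*(W*U) + V*(X*V) + (U*(X*V) + V*(W*U)) - (U*(V*W) + U*(V*X)) := by noncomm_ring
    _ = W*U*U + X*V*V + (U*(X*V) + V*(W*U)) - (V*(W*U) + U*(X*V)) := by rw [e1, e2, e3, e4]
    _ = W*U*U + X*V*V := by abel

theorem coe_commute {A : Type*} [Monoid A] {a b : Aˣ} (h : Commute a b) :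
    Commute (a : A) (b : A) := by
  show (a : A) * b = (b : A) * a
  have := congrArg (fun z : Aˣ => (z : A)) h.eq
  simpa [Units.val_mul] using this

/-- Evaluation of a Laurent polynomial in `n` variables at a family of units
`y : Fin n → Aˣ` of an algebra `A`. -/
noncomputable def laurentEval {n : ℕ} {A : Type*} [Ring A] [Algebra ℂ A]
    (y : Fin n → Aˣ) (p : AddMonoidAlgebra ℂ (Fin n →₀ ℤ)) : A :=
  Finsupp.sum (p.coeff : (Fin n →₀ ℤ) →₀ ℂ)
    (fun m c => c • (((List.finRange n).map fun j => ((y j ^ (m j) : Aˣ) : A)).prod))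

/-- The center of the affine Hecke algebra `H(n, q)` (for `q` not a root of unity)
contains the symmetric Laurent polynomials in `y₁, …, yₙ`: in any algebra with
invertible pairwise-commuting elements `y i` and elements `T i` satisfying the braid,
commutation, quadratic and cross relations of `H(n, q)`, every `Sₙ`-invariant Laurent
polynomial in the `y i` commutes with each generator `T i`. -/
theorem symmetric_laurent_commutes_with_hecke_generators
    (n : ℕ) (A : Type*) [Ring A] [Algebra ℂ A]
    (q : ℂ) (hq0 : q ≠ 0) (hqroot : ∀ m : ℕ, 0 < m → q ^ m ≠ 1)
    (y : Fin n → Aˣ) (T : ℕ → A)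
    (hyy : ∀ i j : Fin n, (y i : A) * (y j : A) = (y j : A) * (y i : A))
    (braid : ∀ i : ℕ, i + 2 < n → T i * T (i + 1) * T i = T (i + 1) * T i * T (i + 1))
    (hcomm : ∀ i j : ℕ, j + 1 < n → i + 1 < j → T i * T j = T j * T i)
    (quad : ∀ i : ℕ, i + 1 < n → (T i - algebraMap ℂ A q) * (T i + 1) = 0)
    (hTy : ∀ (i : ℕ) (h : i + 1 < n),
      T i * (y ⟨i, by omega⟩ : A) * T i = algebraMap ℂ A q * (y ⟨i + 1, h⟩ : A))
    (hTy' : ∀ (i : ℕ), i + 1 < n → ∀ j : Fin n, (j : ℕ) ≠ i → (j : ℕ) ≠ i + 1 →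
      T i * (y j : A) = (y j : A) * T i)
    (p : AddMonoidAlgebra ℂ (Fin n →₀ ℤ))
    (hp : ∀ σ : Equiv.Perm (Fin n), ∀ m : Fin n →₀ ℤ,
      (p.coeff : (Fin n →₀ ℤ) →₀ ℂ) (Finsupp.equivMapDomain σ m) = (p.coeff : (Fin n →₀ ℤ) →₀ ℂ) m) :
    ∀ i : ℕ, i + 1 < n → laurentEval y p * T i = T i * laurentEval y p := by
  intro i h
  set Q : ℂ →+* A := algebraMap ℂ A with hQdef
  set t : A := T i with htdef
  set i1 : Fin n := ⟨i, by omega⟩ with hi1def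
  set i2 : Fin n := ⟨i + 1, h⟩ with hi2def
  set u : Aˣ := y i1 with hudef
  set v : Aˣ := y i2 with hvdef
  -- helpers about the (central) algebra map
  have hc : ∀ (c : ℂ) (x : A), x * Q c = Q c * x := fun c x => (Algebra.commutes c x).symm
  have hswap : ∀ (c : ℂ) (x z : A), x * (Q c * z) = Q c * (x * z) := fun c x z => by
    rw [← mul_assoc, hc, mul_assoc]
  have hQQ : ∀ (c d : ℂ) (z : A), Q c * (Q d * z) = Q (c*d) * z := fun c d z => by
    rw [← mul_assoc, ← map_mul]
  -- basic commutation
  have huv : (u : A) * v = (v : A) * u := hyy i1 i2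
  have huvU : u * v = v * u := Units.ext huv
  have cuv : Commute u v := huvU
  -- quadratic relation rearranged
  have hsq : t * t = Q (q - 1) * t + Q q := by
    have e := quad i h
    have e2 : t * t + t - Q q * t - Q q = 0 := by rw [← e]; noncomm_ring
    have e3 : t * t - (Q (q-1) * t + Q q) = t * t + t - Q q * t - Q q := by
      rw [map_sub, map_one]; noncomm_ring
    exact sub_eq_zero.mp (e3 ▸ e2 : t * t - (Q (q-1) * t + Q q) = 0)
  set tinv : A := Q q⁻¹ * (t - Q (q - 1)) with htinvdef
  have htr : t * (t - Q (q-1)) = Q q := by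
    rw [mul_sub, hsq, hc (q-1)]; abel
  have htl : (t - Q (q-1)) * t = Q q := by
    rw [sub_mul, hsq]; abel
  have htinv1 : t * tinv = 1 := by
    rw [htinvdef, hswap, htr, ← map_mul, inv_mul_cancel₀ hq0, map_one]
  have htinv2 : tinv * t = 1 := by
    rw [htinvdef, mul_assoc, htl, ← map_mul, inv_mul_cancel₀ hq0, map_one]
  have h1 : t * (u : A) * t = Q q * v := hTy i h
  -- T u = v T - (q-1) v
  have hTu : t * (u : A) = (v : A) * t - Q (q-1) * v := by
    have e : t * (u:A) = Q q * ((v:A) * tinv) := by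
      rw [← mul_assoc, ← h1, mul_assoc (t*(u:A)) t tinv, htinv1, mul_one]
    rw [e, htinvdef, hswap q⁻¹, hQQ, mul_inv_cancel₀ hq0, map_one, one_mul, mul_sub,
      hc (q-1)]
  -- T v = u T + (q-1) v
  have hTv : t * (v : A) = (u : A) * t + Q (q-1) * v := by
    have hv : (v : A) = Q q⁻¹ * (t * u * t) := by
      rw [h1, hQQ, inv_mul_cancel₀ hq0, map_one, one_mul]
    calc t * (v : A) = Q q⁻¹ * ((t * t) * ((u:A) * t)) := by
          rw [hv, hswap q⁻¹]
          congr 1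
          noncomm_ring
      _ = Q q⁻¹ * (Q (q-1) * (Q q * (v:A)) + Q q * ((u:A) * t)) := by
          rw [hsq, add_mul, mul_assoc (Q (q-1)) t, ← mul_assoc t (u:A) t, h1]
      _ = (u : A) * t + Q (q-1) * v := by
          rw [mul_add, hQQ (q-1) q, hQQ q⁻¹ ((q-1)*q), hQQ q⁻¹ q,
            inv_mul_cancel₀ hq0, map_one, one_mul,
            show q⁻¹ * ((q-1)*q) = q - 1 by field_simp, add_comm]
  -- T commutes with u v
  have claimB : Commute t ((u:A) * v) := by
    show t * ((u:A)*v) = ((u:A)*v) * t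
    calc t * ((u:A)*v) = (t*(u:A))*v := (mul_assoc _ _ _).symm
      _ = ((v:A)*t)*v - (Q (q-1)*v)*v := by rw [hTu, sub_mul]
      _ = (v:A)*((u:A)*t + Q (q-1)*v) - (Q (q-1)*v)*v := by rw [mul_assoc, hTv]
      _ = (v:A)*((u:A)*t) + ((v:A)*(Q (q-1)*v) - Q (q-1)*((v:A)*v)) := by
          rw [mul_add, mul_assoc]; abel
      _ = (v:A)*((u:A)*t) := by rw [hswap (q-1)]; abel
      _ = ((u:A)*v) * t := by rw [← mul_assoc, ← huv]
  set w : Aˣ := u * v with hwdef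
  have cT2 : Commute t (w : A) := by rw [hwdef, Units.val_mul]; exact claimB
  have cT2' : Commute t ((w⁻¹ : Aˣ) : A) := cT2.units_inv_right
  -- zpow-coe helper
  have hcoe : ∀ (x : Aˣ) (k : ℤ), ((x^(k+1) : Aˣ) : A) = ((x^k : Aˣ) : A) * x := by
    intro x k; rw [zpow_add_one, Units.val_mul]
  -- commutation of coerced zpows
  have hUW : ∀ k : ℤ, (u:A) * ((u^k : Aˣ):A) = ((u^k : Aˣ):A) * u :=
    fun k => coe_commute ((Commute.refl u).zpow_right k)
  have hUX : ∀ k : ℤ, (u:A) * ((v^k : Aˣ):A) = ((v^k : Aˣ):A) * u :=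
    fun k => coe_commute (cuv.zpow_right k)
  have hVW : ∀ k : ℤ, (v:A) * ((u^k : Aˣ):A) = ((u^k : Aˣ):A) * v :=
    fun k => coe_commute (cuv.symm.zpow_right k)
  have hVX : ∀ k : ℤ, (v:A) * ((v^k : Aˣ):A) = ((v^k : Aˣ):A) * v :=
    fun k => coe_commute ((Commute.refl v).zpow_right k)
  -- the three-term recurrence
  have id2 : ∀ k : ℤ, ((u^(k+2) : Aˣ):A) + ((v^(k+2) : Aˣ):A)
      = ((u:A)+(v:A)) * (((u^(k+1) : Aˣ):A) + ((v^(k+1) : Aˣ):A))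
        - (u:A)*(v:A) * (((u^k : Aˣ):A) + ((v^k : Aˣ):A)) := by
    intro k
    have hu2 : ((u^(k+2) : Aˣ):A) = ((u^k : Aˣ):A) * u * u := by
      rw [show k+2 = (k+1)+1 by ring, hcoe, hcoe]
    have hv2 : ((v^(k+2) : Aˣ):A) = ((v^k : Aˣ):A) * v * v := by
      rw [show k+2 = (k+1)+1 by ring, hcoe, hcoe]
    rw [hu2, hv2, hcoe, hcoe]
    exact quad_id (u:A) (v:A) _ _ huv (hUW k) (hUX k) (hVW k) (hVX k)
  have id3 : ∀ k : ℤ, ((u^(k-1) : Aˣ):A) + ((v^(k-1) : Aˣ):A)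
      = ((w⁻¹ : Aˣ):A) * (((u:A)+(v:A)) * (((u^k : Aˣ):A) + ((v^k : Aˣ):A))
        - (((u^(k+1) : Aˣ):A) + ((v^(k+1) : Aˣ):A))) := by
    intro k
    have h2 := id2 (k-1)
    rw [show k-1+2 = k+1 by ring, show k-1+1 = k by ring] at h2
    have h3 : (u:A)*(v:A) * (((u^(k-1) : Aˣ):A) + ((v^(k-1) : Aˣ):A))
        = ((u:A)+(v:A)) * (((u^k : Aˣ):A) + ((v^k : Aˣ):A))
          - (((u^(k+1) : Aˣ):A) + ((v^(k+1) : Aˣ):A)) := by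
      rw [h2]; abel
    calc ((u^(k-1) : Aˣ):A) + ((v^(k-1) : Aˣ):A)
        = (((w⁻¹ : Aˣ):A) * ((w : Aˣ):A)) * (((u^(k-1) : Aˣ):A) + ((v^(k-1) : Aˣ):A)) := by
          rw [Units.inv_mul, one_mul]
      _ = ((w⁻¹ : Aˣ):A) * ((u:A)*(v:A) * (((u^(k-1) : Aˣ):A) + ((v^(k-1) : Aˣ):A))) := by
          rw [mul_assoc, hwdef, Units.val_mul]
      _ = _ := by rw [h3]
  have cT1 : Commute t ((u:A) + (v:A)) := by
    show t * ((u:A)+(v:A)) = ((u:A)+(v:A)) * t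
    rw [mul_add, hTu, hTv, add_mul]
    abel
  -- T commutes with the power sums
  have claimA : ∀ k : ℤ, Commute t (((u^k : Aˣ):A) + ((v^k : Aˣ):A)) := by
    have key : ∀ k : ℤ, Commute t (((u^k : Aˣ):A) + ((v^k : Aˣ):A))
        ∧ Commute t (((u^(k+1) : Aˣ):A) + ((v^(k+1) : Aˣ):A)) := by
      intro k
      induction k using Int.induction_on with
      | zero =>
        constructor
        · simp only [zpow_zero, Units.val_one]
          exact (Commute.one_right t).add_right (Commute.one_right t)
        · simp only [zero_add, zpow_one]
          exact cT1
      | succ j ih =>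
        refine ⟨ih.2, ?_⟩
        rw [show ((j:ℤ)+1)+1 = (j:ℤ)+2 by ring, id2 (j:ℤ)]
        exact (cT1.mul_right ih.2).sub_right (claimB.mul_right ih.1)
      | pred j ih =>
        constructor
        · rw [show (-(j:ℤ)-1) = (-(j:ℤ))-1 by ring, id3 (-(j:ℤ))]
          exact cT2'.mul_right ((cT1.mul_right ih.1).sub_right ih.2)
        · rw [show (-(j:ℤ)-1)+1 = -(j:ℤ) by ring]
          exact ih.1
    exact fun k => (key k).1
  -- T commutes with symmetrized two-variable monomials
  have twovar : ∀ a b : ℤ, Commute t (((u^a : Aˣ):A) * ((v^b : Aˣ):A)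
      + ((u^b : Aˣ):A) * ((v^a : Aˣ):A)) := by
    intro a b
    have hrw : ((u^a : Aˣ):A) * ((v^b : Aˣ):A) + ((u^b : Aˣ):A) * ((v^a : Aˣ):A)
        = ((w^b : Aˣ):A) * (((u^(a-b) : Aˣ):A) + ((v^(a-b) : Aˣ):A)) := by
      have hwb : (w^b : Aˣ) = u^b * v^b := by rw [hwdef, cuv.mul_zpow]
      have e1 : ((v^b : Aˣ):A) * ((u^(a-b) : Aˣ):A) = ((u^(a-b) : Aˣ):A) * ((v^b : Aˣ):A) :=
        coe_commute ((cuv.symm.zpow_zpow b (a-b)))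
      have e2 : ((u^b : Aˣ):A) * ((u^(a-b) : Aˣ):A) = ((u^a : Aˣ):A) := by
        rw [← Units.val_mul, ← zpow_add, show b+(a-b) = a by ring]
      have e3 : ((v^b : Aˣ):A) * ((v^(a-b) : Aˣ):A) = ((v^a : Aˣ):A) := by
        rw [← Units.val_mul, ← zpow_add, show b+(a-b) = a by ring]
      rw [hwb, Units.val_mul, mul_add, mul_assoc, mul_assoc, e1, ← mul_assoc, e2, e3]
    rw [hrw]
    exact (cT2.units_zpow_right b).mul_right (claimA (a-b))
  -- monomials
  set f : (Fin n →₀ ℤ) → Fin n → A := fun m j => ((y j ^ (m j) : Aˣ) : A) with hfdef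
  set M : (Fin n →₀ ℤ) → A := fun m => ((List.finRange n).map (f m)).prod with hMdef
  have hL : laurentEval y p = Finsupp.sum (p.coeff : (Fin n →₀ ℤ) →₀ ℂ) (fun m c => c • M m) := rfl
  set sp : Equiv.Perm (Fin n) := Equiv.swap i1 i2 with hspdef
  set φ : (Fin n →₀ ℤ) → (Fin n →₀ ℤ) := fun m => Finsupp.equivMapDomain (sp : Fin n ≃ Fin n) m
    with hφdef
  have hφ1 : ∀ m, φ m i1 = m i2 := fun m => by
    simp [hφdef, Finsupp.equivMapDomain_apply, hspdef, Equiv.symm_swap, Equiv.swap_apply_left]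
  have hφ2 : ∀ m, φ m i2 = m i1 := fun m => by
    simp [hφdef, Finsupp.equivMapDomain_apply, hspdef, Equiv.symm_swap, Equiv.swap_apply_right]
  have hφo : ∀ m (j : Fin n), j ≠ i1 → j ≠ i2 → φ m j = m j := fun m j h1' h2' => by
    simp [hφdef, Finsupp.equivMapDomain_apply, hspdef, Equiv.symm_swap,
      Equiv.swap_apply_of_ne_of_ne h1' h2']
  have hφφ : ∀ m, φ (φ m) = m := fun m => by
    ext j
    simp [hφdef, Finsupp.equivMapDomain_apply, hspdef, Equiv.symm_swap, Equiv.swap_apply_self]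
  -- commutation facts about monomial factors
  have hfcomm : ∀ (m m' : Fin n →₀ ℤ) (a b : Fin n), Commute (f m a) (f m' b) :=
    fun m m' a b =>
      coe_commute ((show Commute (y a) (y b) from Units.ext (hyy a b)).zpow_zpow _ _)
  have hTf : ∀ (m : Fin n →₀ ℤ) (j : Fin n), j ≠ i1 → j ≠ i2 → Commute t (f m j) := by
    intro m j hj1 hj2
    have hb : Commute t ((y j : A)) :=
      hTy' i h j (fun hv => hj1 (Fin.ext hv)) (fun hv => hj2 (Fin.ext hv))
    exact hb.units_zpow_right (m j)
  -- splitting off the two special positions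
  have hne12 : i2 ≠ i1 := by simp [hi1def, hi2def, Fin.ext_iff]
  have hi1mem : i1 ∈ List.finRange n := List.mem_finRange _
  have hi2mem : i2 ∈ (List.finRange n).erase i1 :=
    (List.mem_erase_of_ne hne12).2 (List.mem_finRange _)
  set rest : List (Fin n) := ((List.finRange n).erase i1).erase i2 with hrestdef
  have hperm : List.Perm (List.finRange n) (i1 :: i2 :: rest) :=
    (List.perm_cons_erase hi1mem).trans ((List.perm_cons_erase hi2mem).cons i1)
  have hrest : ∀ j ∈ rest, j ≠ i1 ∧ j ≠ i2 := by
    intro j hj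
    have hj' : j ∈ (List.finRange n).erase i1 := List.mem_of_mem_erase hj
    constructor
    · rintro rfl
      exact (List.nodup_finRange n).not_mem_erase hj'
    · rintro rfl
      exact ((List.nodup_finRange n).erase i1).not_mem_erase hj
  have hM : ∀ m', M m' = f m' i1 * (f m' i2 * (rest.map (f m')).prod) := by
    intro m'
    have hpair : ((List.finRange n).map (f m')).Pairwise Commute :=
      List.pairwise_map.mpr (list_pairwise_total (fun a b => hfcomm m' m' a b) _)
    have := (hperm.map (f m')).prod_eq' hpair
    simpa using this
  -- the key monomial commutation
  have keyM : ∀ m, Commute t (M m + M (φ m)) := by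
    intro m
    have hRcomm : Commute t ((rest.map (f m)).prod) :=
      Commute.list_prod_right _ _ (by
        intro x hx
        obtain ⟨j, hj, rfl⟩ := List.mem_map.mp hx
        exact hTf m j (hrest j hj).1 (hrest j hj).2)
    have hrem : rest.map (f (φ m)) = rest.map (f m) :=
      List.map_congr_left (fun j hj => by
        have := hφo m j (hrest j hj).1 (hrest j hj).2
        simp [hfdef, this])
    have hf1 : f m i1 = ((u ^ (m i1) : Aˣ) : A) := by simp only [hfdef, hudef]
    have hf2 : f m i2 = ((v ^ (m i2) : Aˣ) : A) := by simp only [hfdef, hvdef]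
    have hfφ1 : f (φ m) i1 = ((u ^ (m i2) : Aˣ) : A) := by simp only [hfdef, hφ1 m, hudef]
    have hfφ2 : f (φ m) i2 = ((v ^ (m i1) : Aˣ) : A) := by simp only [hfdef, hφ2 m, hvdef]
    have e : M m + M (φ m)
        = (((u^(m i1) : Aˣ):A) * ((v^(m i2) : Aˣ):A)
            + ((u^(m i2) : Aˣ):A) * ((v^(m i1) : Aˣ):A)) * (rest.map (f m)).prod := by
      rw [hM m, hM (φ m), hrem, hf1, hf2, hfφ1, hfφ2, ← mul_assoc, ← mul_assoc, ← add_mul]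
    rw [e]
    exact (twovar (m i1) (m i2)).mul_right hRcomm
  -- reindexing the sum along the swap
  have reindex : ∀ X : (Fin n →₀ ℤ) → A,
      (Finsupp.sum (p.coeff : (Fin n →₀ ℤ) →₀ ℂ) fun m c => c • X (φ m))
        = Finsupp.sum (p.coeff : (Fin n →₀ ℤ) →₀ ℂ) fun m c => c • X m := by
    intro X
    let Ψ : (Fin n →₀ ℤ) ≃ (Fin n →₀ ℤ) := ⟨φ, φ, hφφ, hφφ⟩
    have hfix : Finsupp.equivMapDomain Ψ (p.coeff : (Fin n →₀ ℤ) →₀ ℂ)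
        = (p.coeff : (Fin n →₀ ℤ) →₀ ℂ) := by
      ext μ
      rw [Finsupp.equivMapDomain_apply]
      exact hp sp μ
    have hs := Finsupp.sum_equivMapDomain Ψ (p.coeff : (Fin n →₀ ℤ) →₀ ℂ) (fun m c => c • X m)
    rw [hfix] at hs
    exact hs.symm
  -- assembling the sums
  have hTE : t * laurentEval y p
      = Finsupp.sum (p.coeff : (Fin n →₀ ℤ) →₀ ℂ) (fun m c => c • (t * M m)) := by
    rw [hL, Finsupp.mul_sum]
    simp only [mul_smul_comm]
  have hET : laurentEval y p * t
      = Finsupp.sum (p.coeff : (Fin n →₀ ℤ) →₀ ℂ) (fun m c => c • (M m * t)) := by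
    rw [hL, Finsupp.sum_mul]
    simp only [smul_mul_assoc]
  have e1 : (Finsupp.sum (p.coeff : (Fin n →₀ ℤ) →₀ ℂ) fun m c => c • (t * M (φ m)))
      = Finsupp.sum (p.coeff : (Fin n →₀ ℤ) →₀ ℂ) fun m c => c • (t * M m) :=
    reindex (fun m => t * M m)
  have e2 : (Finsupp.sum (p.coeff : (Fin n →₀ ℤ) →₀ ℂ) fun m c => c • (M (φ m) * t))
      = Finsupp.sum (p.coeff : (Fin n →₀ ℤ) →₀ ℂ) fun m c => c • (M m * t) :=
    reindex (fun m => M m * t)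
  have e3 : ((Finsupp.sum (p.coeff : (Fin n →₀ ℤ) →₀ ℂ) fun m c => c • (t * M m))
        + Finsupp.sum (p.coeff : (Fin n →₀ ℤ) →₀ ℂ) fun m c => c • (t * M (φ m)))
      = ((Finsupp.sum (p.coeff : (Fin n →₀ ℤ) →₀ ℂ) fun m c => c • (M m * t))
        + Finsupp.sum (p.coeff : (Fin n →₀ ℤ) →₀ ℂ) fun m c => c • (M (φ m) * t)) := by
    rw [Finsupp.sum, Finsupp.sum, Finsupp.sum, Finsupp.sum,
      ← Finset.sum_add_distrib, ← Finset.sum_add_distrib]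
    refine Finset.sum_congr rfl fun m _ => ?_
    rw [← smul_add, ← smul_add, ← mul_add, (keyM m).eq, add_mul]
  rw [e1, e2] at e3
  have e4 : (2:ℂ) • (Finsupp.sum (p.coeff : (Fin n →₀ ℤ) →₀ ℂ) fun m c => c • (t * M m))
      = (2:ℂ) • (Finsupp.sum (p.coeff : (Fin n →₀ ℤ) →₀ ℂ) fun m c => c • (M m * t)) := by
    rw [two_smul, two_smul]; exact e3
  have e5 := congrArg (fun z : A => (2⁻¹:ℂ) • z) e4
  simp only [smul_smul] at e5
  rw [show (2⁻¹ * 2 : ℂ) = 1 by norm_num, one_smul, one_smul] at e5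
  rw [hET, hTE]
  exact e5.symm
end
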